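/- Let H be a real separable Hilbert space, S : H × H → ℝ a continuous symmetric bilinear form with induced map 𝒮 : H → H* given by (𝒮u)(v) = S(u,v), and let φ be a nonzero continuous linear functional on H which is not a pure limit point of ran(𝒮). If there exists u ∈ H with 𝒮u = φ and φ(u) ≤ 0, then MI^φ(S) = MI(S) − 1; otherwise MI^φ(S) = MI(S). -/

import Mathlib

set_option maxHeartbeats 1000000

/-- The Morse index of the continuous bilinear form `S` restricted to the subspace `G`:
the supremum of dimensions of subspaces of `G` on which `S` is negative definite. -/
noncomputable def morseIndexOn {H : Type*} [NormedAddCommGroup H] [InnerProductSpace ℝ H]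
    (S : H →L[ℝ] H →L[ℝ] ℝ) (G : Submodule ℝ H) : ℕ :=
  sSup {n : ℕ | ∃ W : Submodule ℝ H, W ≤ G ∧ Module.finrank ℝ W = n ∧
    ∀ u ∈ W, u ≠ 0 → S u u < 0}

/-- The (unconstrained) Morse index `MI(S)`. -/
noncomputable def morseIndex {H : Type*} [NormedAddCommGroup H] [InnerProductSpace ℝ H]
    (S : H →L[ℝ] H →L[ℝ] ℝ) : ℕ :=
  morseIndexOn S ⊤

namespace MorseAux

open Module Submodule

variable {H : Type*} [NormedAddCommGroup H] [InnerProductSpace ℝ H]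

def mset (S : H →L[ℝ] H →L[ℝ] ℝ) (G : Submodule ℝ H) : Set ℕ :=
  {n : ℕ | ∃ W : Submodule ℝ H, W ≤ G ∧ Module.finrank ℝ W = n ∧
    ∀ u ∈ W, u ≠ 0 → S u u < 0}

lemma zero_mem_mset (S : H →L[ℝ] H →L[ℝ] ℝ) (G : Submodule ℝ H) : 0 ∈ mset S G :=
  ⟨⊥, bot_le, finrank_bot ℝ H, fun u hu hne => absurd (by simpa using hu) hne⟩

lemma bddAbove_mset (S : H →L[ℝ] H →L[ℝ] ℝ)
    (hfin : BddAbove {n : ℕ | ∃ W : Submodule ℝ H, Module.finrank ℝ W = n ∧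
      ∀ u ∈ W, u ≠ 0 → S u u < 0}) (G : Submodule ℝ H) : BddAbove (mset S G) := by
  obtain ⟨b, hb⟩ := hfin
  exact ⟨b, fun n hn => by obtain ⟨W, _, h2, h3⟩ := hn; exact hb ⟨W, h2, h3⟩⟩

lemma mset_mem_attained (S : H →L[ℝ] H →L[ℝ] ℝ)
    (hfin : BddAbove {n : ℕ | ∃ W : Submodule ℝ H, Module.finrank ℝ W = n ∧
      ∀ u ∈ W, u ≠ 0 → S u u < 0}) (G : Submodule ℝ H) :
    sSup (mset S G) ∈ mset S G :=
  Nat.sSup_mem ⟨0, zero_mem_mset S G⟩ (bddAbove_mset S hfin G)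

lemma mset_findim_witness {S : H →L[ℝ] H →L[ℝ] ℝ} {G : Submodule ℝ H} {n : ℕ}
    (hn : n ∈ mset S G) :
    ∃ W : Submodule ℝ H, W ≤ G ∧ Module.finrank ℝ W = n ∧
      (∀ u ∈ W, u ≠ 0 → S u u < 0) ∧ FiniteDimensional ℝ W := by
  obtain ⟨W, h1, h2, h3⟩ := hn
  rcases Nat.eq_zero_or_pos n with h | h
  · exact ⟨⊥, bot_le, by rw [finrank_bot]; omega,
      fun u hu hne => absurd (by simpa using hu) hne, inferInstance⟩
  · exact ⟨W, h1, h2, h3, FiniteDimensional.of_finrank_pos (h2 ▸ h)⟩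

lemma morseIndexOn_eq_sSup (S : H →L[ℝ] H →L[ℝ] ℝ) (G : Submodule ℝ H) :
    morseIndexOn S G = sSup (mset S G) := rfl

lemma morseIndexOn_le_morseIndex (S : H →L[ℝ] H →L[ℝ] ℝ)
    (hfin : BddAbove {n : ℕ | ∃ W : Submodule ℝ H, Module.finrank ℝ W = n ∧
      ∀ u ∈ W, u ≠ 0 → S u u < 0}) (G : Submodule ℝ H) :
    morseIndexOn S G ≤ morseIndex S := by
  apply csSup_le_csSup (bddAbove_mset S hfin ⊤) ⟨0, zero_mem_mset S G⟩
  rintro n ⟨W, _, h2, h3⟩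
  exact ⟨W, le_top, h2, h3⟩

lemma le_morseIndexOn {S : H →L[ℝ] H →L[ℝ] ℝ} {G : Submodule ℝ H} {n : ℕ}
    (hfin : BddAbove {n : ℕ | ∃ W : Submodule ℝ H, Module.finrank ℝ W = n ∧
      ∀ u ∈ W, u ≠ 0 → S u u < 0})
    (hn : n ∈ mset S G) : n ≤ morseIndexOn S G :=
  le_csSup (bddAbove_mset S hfin G) hn

lemma quad_expand (S : H →L[ℝ] H →L[ℝ] ℝ) (w v : H) (t : ℝ) :
    S (w + t • v) (w + t • v) = S w w + t * S w v + t * S v w + t^2 * S v v := by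
  simp only [map_add, map_smul, ContinuousLinearMap.add_apply,
    ContinuousLinearMap.smul_apply, smul_eq_mul]
  ring

lemma norm_one_smul_mem_sphere {W : Submodule ℝ H} (w : H) (hw : w ∈ W) (hne : w ≠ 0) :
    (‖w‖⁻¹ : ℝ) • (⟨w, hw⟩ : W) ∈ Metric.sphere (0 : W) 1 := by
  have h0 : ‖w‖ ≠ 0 := by simpa using hne
  rw [mem_sphere_zero_iff_norm, norm_smul]
  have : ‖(⟨w, hw⟩ : W)‖ = ‖w‖ := rfl
  rw [this, Real.norm_eq_abs, abs_inv, abs_of_nonneg (norm_nonneg _)]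
  field_simp

lemma negdef_bound (S : H →L[ℝ] H →L[ℝ] ℝ) (W : Submodule ℝ H) [FiniteDimensional ℝ W]
    (hneg : ∀ u ∈ W, u ≠ 0 → S u u < 0) :
    ∃ c > 0, ∀ w ∈ W, S w w ≤ -c * ‖w‖^2 := by
  by_cases hbot : W = ⊥
  · refine ⟨1, one_pos, fun w hw => ?_⟩
    have : w = 0 := by simpa [hbot] using hw
    simp [this]
  · obtain ⟨w₀, hw₀, hw₀ne⟩ := Submodule.exists_mem_ne_zero_of_ne_bot hbot
    have hcont : Continuous fun w : W => S w w := by fun_prop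
    have hne : (Metric.sphere (0 : W) 1).Nonempty :=
      ⟨_, norm_one_smul_mem_sphere w₀ hw₀ hw₀ne⟩
    obtain ⟨x, hx, hmax⟩ := (isCompact_sphere (0 : W) 1).exists_isMaxOn hne hcont.continuousOn
    have hx1 : ‖(x : H)‖ = 1 := by simpa using hx
    have hxne : (x : H) ≠ 0 := by intro h; rw [h] at hx1; simp at hx1
    have hxneg : S x x < 0 := hneg x x.2 hxne
    refine ⟨-S x x, by linarith, fun w hw => ?_⟩
    rcases eq_or_ne w 0 with rfl | hwne
    · simp
    · have hnw : (0:ℝ) < ‖w‖ := norm_pos_iff.2 hwne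
      have hyle : S ((‖w‖⁻¹ : ℝ) • w) ((‖w‖⁻¹ : ℝ) • w) ≤ S x x :=
        hmax (norm_one_smul_mem_sphere w hw hwne)
      have hyy : S ((‖w‖⁻¹ : ℝ) • w) ((‖w‖⁻¹ : ℝ) • w) = ‖w‖⁻¹ * (‖w‖⁻¹ * S w w) := by
        simp [map_smul, smul_eq_mul]
      rw [hyy] at hyle
      have h2 : ‖w‖^2 * (‖w‖⁻¹ * (‖w‖⁻¹ * S w w)) ≤ ‖w‖^2 * S x x :=
        mul_le_mul_of_nonneg_left hyle (sq_nonneg _)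
      have h3 : ‖w‖^2 * (‖w‖⁻¹ * (‖w‖⁻¹ * S w w)) = S w w := by
        field_simp
      rw [h3] at h2
      nlinarith

lemma proj_lemma (S : H →L[ℝ] H →L[ℝ] ℝ) (hsym : ∀ u v : H, S u v = S v u)
    (φ : H →L[ℝ] ℝ) (u : H) (hu : φ u ≠ 0) (huu : 0 ≤ S u u)
    (hkey : ∀ w : H, ((φ u)⁻¹ * φ w)^2 * S u u ≤ 2 * ((φ u)⁻¹ * φ w) * S u w)
    (W : Submodule ℝ H) [FiniteDimensional ℝ W]
    (hneg : ∀ x ∈ W, x ≠ 0 → S x x < 0) :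
    ∃ W' : Submodule ℝ H, W' ≤ LinearMap.ker (φ : H →ₗ[ℝ] ℝ) ∧ Module.finrank ℝ W' = Module.finrank ℝ W ∧
      ∀ x ∈ W', x ≠ 0 → S x x < 0 := by
  set g : W →ₗ[ℝ] H :=
    W.subtype - LinearMap.smulRight ((φ u)⁻¹ • ((φ : H →ₗ[ℝ] ℝ).comp W.subtype)) u with hgdef
  have hg : ∀ w : W, g w = (w : H) - ((φ u)⁻¹ * φ w) • u := by
    intro w
    simp [hgdef, LinearMap.smulRight_apply, smul_smul]
  have hQ : ∀ w : W, S (g w) (g w) =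
      S w w - 2 * ((φ u)⁻¹ * φ w) * S u w + ((φ u)⁻¹ * φ w)^2 * S u u := by
    intro w
    rw [hg]
    simp only [map_sub, map_smul, ContinuousLinearMap.sub_apply,
      ContinuousLinearMap.smul_apply, smul_eq_mul]
    rw [hsym (w : H) u]
    ring
  have hQle : ∀ w : W, S (g w) (g w) ≤ S w w := fun w => by
    have := hkey (w : H); rw [hQ w]; linarith
  have hinj : Function.Injective g := by
    rw [← LinearMap.ker_eq_bot, LinearMap.ker_eq_bot']
    intro w hw0
    rw [hg] at hw0
    have hwu : (w : H) = ((φ u)⁻¹ * φ w) • u := sub_eq_zero.mp hw0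
    by_contra hne
    have hwH : (w : H) ≠ 0 := fun h => hne (Subtype.ext h)
    have h1 : S w w < 0 := hneg w w.2 hwH
    have h2 : S (w : H) (w : H) = ((φ u)⁻¹ * φ (w : H))^2 * S u u := by
      conv_lhs => rw [hwu]
      simp only [map_smul, ContinuousLinearMap.smul_apply, smul_eq_mul]
      ring
    nlinarith [sq_nonneg ((φ u)⁻¹ * φ (w : H))]
  refine ⟨LinearMap.range g, ?_, LinearMap.finrank_range_of_inj hinj, ?_⟩
  · rintro x ⟨w, rfl⟩
    rw [LinearMap.mem_ker, hg]
    simp only [map_sub, map_smul, smul_eq_mul]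
    field_simp
    simp only [ContinuousLinearMap.coe_coe]
    ring
  · rintro x ⟨w, rfl⟩ hxne
    have hwne : (w : H) ≠ 0 := by
      intro h
      apply hxne
      rw [hg, h]
      have : φ (w : H) = 0 := by rw [h]; simp
      simp [this]
    exact lt_of_le_of_lt (hQle w) (hneg w w.2 hwne)

lemma finrank_le_inf_ker_add_one (φ : H →L[ℝ] ℝ) (W : Submodule ℝ H) [FiniteDimensional ℝ W] :
    finrank ℝ W ≤ finrank ℝ (W ⊓ LinearMap.ker (φ : H →ₗ[ℝ] ℝ) : Submodule ℝ H) + 1 := by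
  set ψ : W →ₗ[ℝ] ℝ := (φ : H →ₗ[ℝ] ℝ).comp W.subtype with hψ
  have h1 : finrank ℝ (LinearMap.range ψ) + finrank ℝ (LinearMap.ker ψ) = finrank ℝ W :=
    ψ.finrank_range_add_finrank_ker
  have h2 : finrank ℝ (LinearMap.range ψ) ≤ 1 := by
    have := Submodule.finrank_le (LinearMap.range ψ)
    simpa using this
  have h3 : LinearMap.ker ψ = Submodule.comap W.subtype (LinearMap.ker (φ : H →ₗ[ℝ] ℝ)) := by
    rw [hψ, LinearMap.ker_comp]
  have h4 : finrank ℝ (W ⊓ LinearMap.ker (φ : H →ₗ[ℝ] ℝ) : Submodule ℝ H) = finrank ℝ (LinearMap.ker ψ) := by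
    rw [h3, ← Submodule.map_comap_subtype, Submodule.finrank_map_subtype_eq]
  omega

lemma extend_lemma (S : H →L[ℝ] H →L[ℝ] ℝ) (hsym : ∀ u v : H, S u v = S v u)
    (φ : H →L[ℝ] ℝ) (hφ : φ ≠ 0) (u : H) (hSu : S u = φ) (hule : φ u ≤ 0)
    (W : Submodule ℝ H) [FiniteDimensional ℝ W] (hWker : W ≤ LinearMap.ker (φ : H →ₗ[ℝ] ℝ))
    (hbound' : ∃ c > 0, ∀ w ∈ W, S w w ≤ -c * ‖w‖^2) :
    ∃ W' : Submodule ℝ H, finrank ℝ W' = finrank ℝ W + 1 ∧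
      ∀ x ∈ W', x ≠ 0 → S x x < 0 := by
  obtain ⟨c, hc, hbound⟩ := hbound'
  obtain ⟨z₀, hz₀⟩ := DFunLike.ne_iff.mp hφ
  have hz₀' : φ z₀ ≠ 0 := by simpa using hz₀
  set z : H := (φ z₀)⁻¹ • z₀ with hzdef
  have hz : φ z = 1 := by rw [hzdef]; simp [map_smul]; field_simp
  set M : ℝ := ‖S z‖ with hMdef
  set q : ℝ := S z z with hqdef
  set ε : ℝ := c / (c * |q| + 2 * M^2 + c) with hεdef
  have hden : (0:ℝ) < c * |q| + 2 * M^2 + c := by positivity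
  have hε : 0 < ε := div_pos hc hden
  have hεkey : ε * (c * |q| + 2 * M^2) < c := by
    rw [hεdef, div_mul_eq_mul_div, div_lt_iff₀ hden]
    nlinarith [abs_nonneg q, sq_nonneg M]
  set v : H := u - ε • z with hvdef
  have hSuu : S u u ≤ 0 := by
    have : S u u = φ u := by rw [hSu]
    linarith [this ▸ hule]
  have hSuz : S u z = 1 := by rw [hSu]; exact hz
  have hvv : S v v = S u u - 2*ε + ε^2 * q := by
    rw [hvdef]
    simp only [map_sub, map_smul, ContinuousLinearMap.sub_apply,
      ContinuousLinearMap.smul_apply, smul_eq_mul]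
    rw [hsym z u, hSuz]
    ring
  have hM : ∀ w : H, |S z w| ≤ M * ‖w‖ := fun w => by
    have := (S z).le_opNorm w
    simpa [Real.norm_eq_abs] using this
  have hsvw : ∀ w ∈ W, S v w = -(ε * S z w) := by
    intro w hw
    have hφw : φ w = 0 := hWker hw
    have hSuw : S u w = 0 := by rw [hSu]; exact hφw
    rw [hvdef]
    simp only [map_sub, map_smul, ContinuousLinearMap.sub_apply,
      ContinuousLinearMap.smul_apply, smul_eq_mul]
    rw [hSuw]; ring
  -- the crucial negativity estimate
  have hSvv_le : S v v ≤ -2*ε + ε^2 * |q| := by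
    have hq : q ≤ |q| := le_abs_self q
    nlinarith [sq_nonneg ε]
  have h3 : c * S v v + 2 * ε^2 * M^2 < 0 := by
    have e1 : ε^2 * (c * |q| + 2 * M^2) < ε * c := by
      calc ε^2 * (c * |q| + 2 * M^2) = ε * (ε * (c * |q| + 2 * M^2)) := by ring
      _ < ε * c := by exact mul_lt_mul_of_pos_left hεkey hε
    linarith [mul_le_mul_of_nonneg_left hSvv_le hc.le, mul_pos hε hc]
  have hkey : ∀ w ∈ W, ∀ t : ℝ, (w ≠ 0 ∨ t ≠ 0) →
      S w w + 2*t*(S v w) + t^2 * S v v < 0 := by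
    intro w hw t hwt
    have hsw := hsvw w hw
    have hMw := hM w
    have hbw := hbound w hw
    rcases eq_or_ne t 0 with rfl | ht
    · have hwne : w ≠ 0 := hwt.resolve_right (fun h => h rfl)
      have hnw : (0:ℝ) < ‖w‖ := norm_pos_iff.2 hwne
      nlinarith [mul_pos hc (pow_pos hnw 2)]
    · have ht2 : (0:ℝ) < t^2 := by positivity
      have habs : 2*t*(S v w) ≤ 2 * |t| * ε * |S z w| := by
        rw [hsw]
        calc 2*t*(-(ε * S z w)) ≤ |2*t*(-(ε * S z w))| := le_abs_self _
        _ = |2*t*(ε * S z w)| := by rw [← abs_neg]; ring_nf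
        _ = 2 * |t| * ε * |S z w| := by
            rw [abs_mul, abs_mul, abs_mul]
            rw [abs_of_nonneg (by norm_num : (0:ℝ) ≤ 2), abs_of_nonneg hε.le]
            ring
      have h1 : 2 * |t| * ε * |S z w| ≤ 2 * |t| * ε * (M * ‖w‖) := by
        have h0 : (0:ℝ) ≤ 2 * |t| * ε := by positivity
        exact mul_le_mul_of_nonneg_left hMw h0
      have h2' : c * (2 * |t| * ε * (M * ‖w‖)) ≤ (c^2/2) * ‖w‖^2 + 2 * ε^2 * M^2 * |t|^2 := by
        nlinarith [sq_nonneg (c * ‖w‖ - 2 * ε * M * |t|)]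
      have h2 : c * (2 * |t| * ε * (M * ‖w‖)) ≤ (c^2/2) * ‖w‖^2 + 2 * ε^2 * M^2 * t^2 := by
        rw [sq_abs] at h2'; exact h2' 
      have hstep : c * (S w w + 2*t*(S v w) + t^2 * S v v) < 0 := by
        have c1 : c * (2*t*(S v w)) ≤ c * (2 * |t| * ε * (M * ‖w‖)) :=
          mul_le_mul_of_nonneg_left (habs.trans h1) hc.le
        have c2 : c * (S w w) ≤ c * (-c * ‖w‖^2) := mul_le_mul_of_nonneg_left hbw hc.le
        have c3 : t^2 * (c * S v v + 2 * ε^2 * M^2) < 0 := mul_neg_of_pos_of_neg ht2 h3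
        nlinarith [c1, c2, c3, h2, sq_nonneg ‖w‖, sq_nonneg c]
      by_contra hcon
      push_neg at hcon
      have := mul_nonneg hc.le hcon
      linarith
  -- v is independent of W
  have hφv : φ v < 0 := by
    rw [hvdef]
    simp only [map_sub, map_smul, smul_eq_mul]
    rw [hz]
    linarith
  have hvne : v ≠ 0 := fun h => by rw [h] at hφv; simp at hφv
  have hinf : W ⊓ Submodule.span ℝ {v} = ⊥ := by
    rw [eq_bot_iff]
    rintro x ⟨hxW, hxs⟩
    obtain ⟨a, rfl⟩ := Submodule.mem_span_singleton.mp hxs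
    have : φ (a • v) = 0 := hWker hxW
    rw [map_smul, smul_eq_mul] at this
    have ha : a = 0 := by
      rcases mul_eq_zero.mp this with h | h
      · exact h
      · exact absurd h (ne_of_lt hφv)
    simp [ha]
  refine ⟨W ⊔ Submodule.span ℝ {v}, ?_, ?_⟩
  · have := Submodule.finrank_sup_add_finrank_inf_eq W (Submodule.span ℝ {v})
    rw [hinf, finrank_span_singleton hvne] at this
    simpa using this
  · intro x hx hxne
    obtain ⟨w, hwW, y, hys, hwy⟩ := Submodule.mem_sup.mp hx
    obtain ⟨t, rfl⟩ := Submodule.mem_span_singleton.mp hys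
    have hor : w ≠ 0 ∨ t ≠ 0 := by
      by_contra hcon
      push_neg at hcon
      apply hxne
      rw [← hwy, hcon.1, hcon.2]
      simp
    have := hkey w hwW t hor
    rw [← hwy]
    calc S (w + t • v) (w + t • v) = S w w + t * S w v + t * S v w + t^2 * S v v :=
          quad_expand S w v t
    _ = S w w + 2*t*(S v w) + t^2 * S v v := by rw [hsym w v]; ring
    _ < 0 := this

section
variable [CompleteSpace H]

lemma exists_ker_vector (S : H →L[ℝ] H →L[ℝ] ℝ) (hsym : ∀ u v : H, S u v = S v u)
    (φ : H →L[ℝ] ℝ) (hcl : φ ∉ closure (Set.range fun u : H => S u)) :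
    ∃ u₀ : H, S u₀ = 0 ∧ φ u₀ ≠ 0 := by
  by_contra hcon
  push_neg at hcon
  apply hcl
  set F := InnerProductSpace.toDual ℝ H with hF
  set A : H → H := fun u => F.symm (S u) with hA
  have hFA : ∀ u : H, F (A u) = S u := fun u => F.apply_symm_apply (S u)
  have hinner : ∀ u v : H, (inner ℝ (A u) v : ℝ) = S u v := by
    intro u v
    rw [← InnerProductSpace.toDual_apply_apply, hFA]
  set K : Submodule ℝ H :=
    { carrier := Set.range A
      add_mem' := by
        rintro _ _ ⟨a, rfl⟩ ⟨b, rfl⟩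
        exact ⟨a + b, by rw [hA]; simp [map_add]⟩
      zero_mem' := ⟨0, by rw [hA]; simp⟩
      smul_mem' := by
        rintro c _ ⟨a, rfl⟩
        refine ⟨c • a, ?_⟩
        rw [hA]
        simp only [map_smul] } with hK
  set f : H := F.symm φ with hf
  have hmem : f ∈ Kᗮᗮ := by
    rw [Submodule.mem_orthogonal]
    intro y hy
    rw [Submodule.mem_orthogonal] at hy
    have hSy : ∀ v : H, S y v = 0 := by
      intro v
      have h1 : (inner ℝ (A v) y : ℝ) = 0 := hy (A v) ⟨v, rfl⟩
      rw [hinner] at h1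
      rw [hsym]; exact h1
    have hSy0 : S y = 0 := by ext v; exact hSy v
    have hφy : φ y = 0 := hcon y hSy0
    have : (inner ℝ f y : ℝ) = φ y := by
      rw [hf, ← InnerProductSpace.toDual_apply_apply, F.apply_symm_apply]
    rw [real_inner_comm]
    rw [this, hφy]
  rw [Submodule.orthogonal_orthogonal_eq_closure] at hmem
  have hmem2 : f ∈ closure (K : Set H) := hmem
  have : φ = F f := (F.apply_symm_apply φ).symm
  rw [this]
  have himg := (image_closure_subset_closure_image F.continuous) (Set.mem_image_of_mem F hmem2)
  refine Set.mem_of_mem_of_subset himg (closure_mono ?_)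
  rintro _ ⟨x, ⟨a, rfl⟩, rfl⟩
  exact ⟨a, (hFA a).symm⟩

end

end MorseAux

open MorseAux Module

theorem morse_index_with_one_constraint
    {H : Type*} [NormedAddCommGroup H] [InnerProductSpace ℝ H] [CompleteSpace H]
    [TopologicalSpace.SeparableSpace H]
    (S : H →L[ℝ] H →L[ℝ] ℝ) (hsym : ∀ u v : H, S u v = S v u)
    -- MI(S) is finite:
    (hfin : BddAbove {n : ℕ | ∃ W : Submodule ℝ H, Module.finrank ℝ W = n ∧
      ∀ u ∈ W, u ≠ 0 → S u u < 0})
    (φ : H →L[ℝ] ℝ) (hφ : φ ≠ 0)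
    -- φ is not a pure limit point of ran(𝒮):
    (hnotpure : ¬ (φ ∈ closure (Set.range fun u : H => S u) ∧
      φ ∉ Set.range fun u : H => S u)) :
    ((∃ u : H, S u = φ ∧ φ u ≤ 0) →
        morseIndexOn S (LinearMap.ker (φ : H →ₗ[ℝ] ℝ)) = morseIndex S - 1) ∧
    (¬ (∃ u : H, S u = φ ∧ φ u ≤ 0) →
        morseIndexOn S (LinearMap.ker (φ : H →ₗ[ℝ] ℝ)) = morseIndex S) := by
  -- general facts
  have hdrop : morseIndex S ≤ morseIndexOn S (LinearMap.ker (φ : H →ₗ[ℝ] ℝ)) + 1 := by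
    -- take a maximal negative definite subspace, intersect with ker φ
    have hmem := mset_mem_attained S hfin (⊤ : Submodule ℝ H)
    obtain ⟨W, -, hrank, hneg, hfd⟩ := mset_findim_witness hmem
    have h1 : finrank ℝ W ≤ finrank ℝ (W ⊓ LinearMap.ker (φ : H →ₗ[ℝ] ℝ) : Submodule ℝ H) + 1 :=
      finrank_le_inf_ker_add_one φ W
    have h2 : finrank ℝ (W ⊓ LinearMap.ker (φ : H →ₗ[ℝ] ℝ) : Submodule ℝ H) ∈ mset S (LinearMap.ker (φ : H →ₗ[ℝ] ℝ)) :=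
      ⟨W ⊓ LinearMap.ker (φ : H →ₗ[ℝ] ℝ), inf_le_right, rfl, fun x hx hxne => hneg x hx.1 hxne⟩
    have h3 : finrank ℝ (W ⊓ LinearMap.ker (φ : H →ₗ[ℝ] ℝ) : Submodule ℝ H) ≤
        sSup (mset S (LinearMap.ker (φ : H →ₗ[ℝ] ℝ))) := le_morseIndexOn hfin h2
    show sSup (mset S ⊤) ≤ sSup (mset S (LinearMap.ker (φ : H →ₗ[ℝ] ℝ))) + 1
    omega
  have hmono : morseIndexOn S (LinearMap.ker (φ : H →ₗ[ℝ] ℝ)) ≤ morseIndex S :=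
    morseIndexOn_le_morseIndex S hfin (LinearMap.ker (φ : H →ₗ[ℝ] ℝ))
  constructor
  · -- constrained case: index drops by exactly one
    rintro ⟨u, hSu, hule⟩
    have hmem := mset_mem_attained S hfin (LinearMap.ker (φ : H →ₗ[ℝ] ℝ))
    obtain ⟨W, hWker, hrank, hneg, hfd⟩ := mset_findim_witness hmem
    obtain ⟨W', hrank', hneg'⟩ :=
      extend_lemma S hsym φ hφ u hSu hule W hWker (negdef_bound S W hneg)
    have h4 : finrank ℝ W' ∈ mset S (⊤ : Submodule ℝ H) := ⟨W', le_top, rfl, hneg'⟩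
    have h5 : finrank ℝ W' ≤ sSup (mset S ⊤) := le_morseIndexOn hfin h4
    have hd : sSup (mset S ⊤) ≤ sSup (mset S (LinearMap.ker (φ : H →ₗ[ℝ] ℝ))) + 1 := hdrop
    show sSup (mset S (LinearMap.ker (φ : H →ₗ[ℝ] ℝ))) = sSup (mset S ⊤) - 1
    omega
  · -- unconstrained case: index is preserved
    intro hnex
    refine le_antisymm hmono ?_
    have hmem := mset_mem_attained S hfin (⊤ : Submodule ℝ H)
    obtain ⟨W, -, hrank, hneg, hfd⟩ := mset_findim_witness hmem
    have hproj : ∃ W' : Submodule ℝ H, W' ≤ LinearMap.ker (φ : H →ₗ[ℝ] ℝ) ∧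
        finrank ℝ W' = finrank ℝ W ∧ ∀ x ∈ W', x ≠ 0 → S x x < 0 := by
      by_cases hran : φ ∈ Set.range fun u : H => S u
      · obtain ⟨u, hSu0⟩ := hran
        have hSu : S u = φ := hSu0
        have hupos : 0 < φ u := by
          by_contra hle
          push_neg at hle
          exact hnex ⟨u, hSu, hle⟩
        have huu : 0 ≤ S u u := by
          have : S u u = φ u := by rw [hSu]
          linarith [this ▸ hupos]
        refine proj_lemma S hsym φ u (ne_of_gt hupos) huu (fun w => ?_) W hneg
        have hw : S u w = φ w := by rw [hSu]
        have hSuu : S u u = φ u := by rw [hSu]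
        rw [hw, hSuu]
        have hne : φ u ≠ 0 := ne_of_gt hupos
        have eq2 : ((φ u)⁻¹ * φ w) * φ w = ((φ u)⁻¹ * φ w)^2 * φ u := by
          field_simp
        linarith [eq2, mul_nonneg (sq_nonneg ((φ u)⁻¹ * φ w)) hupos.le]
      · have hcl : φ ∉ closure (Set.range fun u : H => S u) := fun h => hnotpure ⟨h, hran⟩
        obtain ⟨u₀, hS0, hφ0⟩ := exists_ker_vector S hsym φ hcl
        refine proj_lemma S hsym φ u₀ hφ0 ?_ (fun w => ?_) W hneg
        · rw [hS0]; simp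
        · rw [hS0]; simp
    obtain ⟨W', hW'ker, hW'rank, hW'neg⟩ := hproj
    have h7 : finrank ℝ W' ∈ mset S (LinearMap.ker (φ : H →ₗ[ℝ] ℝ)) := ⟨W', hW'ker, rfl, hW'neg⟩
    have h8 : finrank ℝ W' ≤ sSup (mset S (LinearMap.ker (φ : H →ₗ[ℝ] ℝ))) := le_morseIndexOn hfin h7
    show sSup (mset S ⊤) ≤ sSup (mset S (LinearMap.ker (φ : H →ₗ[ℝ] ℝ)))
    omega
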